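/- Fix a norm ‖·‖ on R² and let ℵ₀ = {v ∈ R_+² : ‖v‖ = 1}. Let h : (0,∞) → (0,∞) be regularly varying with index ρ < 0 and let u : Z_+² → R_+ satisfy: there exists λ₀ > 0 on ℵ₀ with lim_{t→∞} u(⌊t x⌋, ⌊t y⌋)/h(t) = λ₀(x,y) for all (x,y) ∈ ℵ₀. Then u is embeddable: the function f : R_+² → R defined by f(x,y) = u(⌊x⌋,⌊y⌋) satisfies lim_{t→∞} f(tx,ty)/h(t) = λ(x,y) = λ₀((x,y)/‖(x,y)‖) · ‖(x,y)‖^ρ for all x,y > 0. -/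

import Mathlib

open Filter Topology

/-- under convergence on the unit sphere `ℵ₀`, the mass function
`u` is embeddable: `f(x,y) = u(⌊x⌋,⌊y⌋)` satisfies
`f(tx,ty)/h(t) → λ₀((x,y)/‖(x,y)‖) ‖(x,y)‖^ρ` along real `t → ∞`. -/
theorem stmt_11
    (N : Seminorm ℝ (ℝ × ℝ)) (hN : ∀ v : ℝ × ℝ, N v = 0 → v = 0)
    (h : ℝ → ℝ) (hpos : ∀ t : ℝ, 0 < t → 0 < h t)
    (ρ : ℝ) (hρ : ρ < 0)
    (hRV : ∀ x : ℝ, 0 < x →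
      Tendsto (fun t : ℝ => h (t * x) / h t) atTop (𝓝 (x ^ ρ)))
    (u : ℕ → ℕ → ℝ) (hu_nonneg : ∀ i j, 0 ≤ u i j)
    (lam₀ : ℝ → ℝ → ℝ)
    (hlam₀ : ∀ x y : ℝ, 0 ≤ x → 0 ≤ y → N (x, y) = 1 → 0 < lam₀ x y)
    (hlim : ∀ x y : ℝ, 0 ≤ x → 0 ≤ y → N (x, y) = 1 →
      Tendsto (fun t : ℝ => u ⌊t * x⌋₊ ⌊t * y⌋₊ / h t) atTop
        (𝓝 (lam₀ x y)))
    (f : ℝ → ℝ → ℝ) (hf : ∀ x y : ℝ, f x y = u ⌊x⌋₊ ⌊y⌋₊) :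
    ∀ x y : ℝ, 0 < x → 0 < y →
      Tendsto (fun t : ℝ => f (t * x) (t * y) / h t) atTop
        (𝓝 (lam₀ (x / N (x, y)) (y / N (x, y)) * (N (x, y) : ℝ) ^ ρ)) := by
  intro x y hx hy
  set r : ℝ := N (x, y) with hr
  have hv : (x, y) ≠ (0 : ℝ × ℝ) := by
    intro hxy
    have : x = 0 := congrArg Prod.fst hxy
    exact hx.ne' this
  have hrpos : 0 < r := by
    rcases lt_or_eq_of_le (apply_nonneg N (x, y)) with h1 | h1
    · exact h1
    · exact absurd (hN _ h1.symm) hv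
  have hunit : N (x / r, y / r) = 1 := by
    have : (x / r, y / r) = r⁻¹ • ((x, y) : ℝ × ℝ) := by
      simp [Prod.smul_mk, div_eq_inv_mul]
    rw [this, map_smul_eq_mul, Real.norm_eq_abs, abs_of_pos (inv_pos.mpr hrpos)]
    field_simp
    exact hr.symm
  have h1 : Tendsto (fun s : ℝ => u ⌊s * (x / r)⌋₊ ⌊s * (y / r)⌋₊ / h s) atTop
      (𝓝 (lam₀ (x / r) (y / r))) :=
    hlim _ _ (div_nonneg hx.le hrpos.le) (div_nonneg hy.le hrpos.le) hunit
  have hcomp : Tendsto (fun t : ℝ => t * r) atTop atTop :=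
    tendsto_id.atTop_mul_const hrpos
  have h2 : Tendsto (fun t : ℝ => u ⌊t * x⌋₊ ⌊t * y⌋₊ / h (t * r)) atTop
      (𝓝 (lam₀ (x / r) (y / r))) := by
    have := h1.comp hcomp
    refine this.congr fun t => ?_
    have hxx : t * r * (x / r) = t * x := by field_simp
    have hyy : t * r * (y / r) = t * y := by field_simp
    simp [Function.comp, hxx, hyy]
  have h3 : Tendsto (fun t : ℝ => h (t * r) / h t) atTop (𝓝 (r ^ ρ)) :=
    hRV r hrpos
  have h4 := h2.mul h3
  refine h4.congr' ?_
  filter_upwards [eventually_gt_atTop (0 : ℝ)] with t ht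
  have htr : 0 < h (t * r) := hpos _ (mul_pos ht hrpos)
  have hht : 0 < h t := hpos _ ht
  rw [hf]
  field_simp
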